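/- Every almost total ordering ≺ of I (measurable as a subset of I²) is generated by a nonsingular measurable function: the function f(u) := Leb({v ∈ I : v ≺ u}) maps I to I, preserves Lebesgue measure, every level set of f has measure zero, and for almost every pair (u,v) ∈ I², u ≺ v if and only if f(u) < f(v). -/

import Mathlib

open MeasureTheory

/-- `R` (as a binary relation `u ≺ v ⟺ (u,v) ∈ R`) is an almost total ordering of
`I = [0,1]`. -/
def IsAlmostTotalOrder (R : Set (ℝ × ℝ)) : Prop :=
  volume {p : ℝ × ℝ | p.1 ∈ Set.Icc (0:ℝ) 1 ∧ p.2 ∈ Set.Icc (0:ℝ) 1 ∧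
      p ∉ R ∧ (p.2, p.1) ∉ R} = 0 ∧
  volume {p : ℝ × ℝ | p.1 ∈ Set.Icc (0:ℝ) 1 ∧ p.2 ∈ Set.Icc (0:ℝ) 1 ∧
      p ∈ R ∧ (p.2, p.1) ∈ R} = 0 ∧
  volume {q : ℝ × ℝ × ℝ | q.1 ∈ Set.Icc (0:ℝ) 1 ∧ q.2.1 ∈ Set.Icc (0:ℝ) 1 ∧
      q.2.2 ∈ Set.Icc (0:ℝ) 1 ∧
      (q.1, q.2.1) ∈ R ∧ (q.2.1, q.2.2) ∈ R ∧ (q.1, q.2.2) ∉ R} = 0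

/-- `f(u) = Leb({v ∈ I : v ≺ u})`, the measure of the lower section at `u`. -/
noncomputable def ordf (R : Set (ℝ × ℝ)) (u : ℝ) : ℝ :=
  (volume {v : ℝ | v ∈ Set.Icc (0:ℝ) 1 ∧ (v, u) ∈ R}).toReal


open MeasureTheory Set Filter ENNReal

namespace ATO

noncomputable def m : Measure ℝ := volume.restrict (Set.Icc 0 1)

lemma m_univ : m Set.univ = 1 := by
  simp [m, Real.volume_Icc]

instance : IsProbabilityMeasure m := ⟨m_univ⟩

variable {R : Set (ℝ × ℝ)}

/-- lower section -/
def L (R : Set (ℝ × ℝ)) (x : ℝ) : Set ℝ := {w | (w, x) ∈ R}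
/-- between set -/
def M (R : Set (ℝ × ℝ)) (u v : ℝ) : Set ℝ := {w | (u, w) ∈ R ∧ (w, v) ∈ R}

lemma measL (hR : MeasurableSet R) (x : ℝ) : MeasurableSet (L R x) :=
  (measurable_id.prodMk measurable_const) hR

lemma measM (hR : MeasurableSet R) (u v : ℝ) : MeasurableSet (M R u v) :=
  ((measurable_const.prodMk measurable_id) hR).inter
    ((measurable_id.prodMk measurable_const) hR)

lemma ordf_eq (hR : MeasurableSet R) (u : ℝ) : ordf R u = (m (L R u)).toReal := by
  have : m (L R u) = volume {v : ℝ | v ∈ Set.Icc (0:ℝ) 1 ∧ (v, u) ∈ R} := by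
    rw [m, Measure.restrict_apply (measL hR u)]
    congr 1
    ext v
    simp [L, and_comm]
  rw [ordf, this]

lemma mL_ne_top (hR : MeasurableSet R) (u : ℝ) : m (L R u) ≠ ⊤ := measure_ne_top _ _

lemma ofReal_ordf (hR : MeasurableSet R) (u : ℝ) :
    ENNReal.ofReal (ordf R u) = m (L R u) := by
  rw [ordf_eq hR, ENNReal.ofReal_toReal (mL_ne_top hR u)]

lemma measurable_ordf (hR : MeasurableSet R) : Measurable (ordf R) := by
  have hs : MeasurableSet {p : ℝ × ℝ | p.2 ∈ Set.Icc (0:ℝ) 1 ∧ (p.2, p.1) ∈ R} := by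
    refine (measurable_snd measurableSet_Icc).inter ?_
    exact (measurable_snd.prodMk measurable_fst) hR
  have := measurable_measure_prodMk_left (ν := (volume : Measure ℝ)) hs
  exact this.ennreal_toReal

lemma ordf_mem_Icc (hR : MeasurableSet R) (u : ℝ) : ordf R u ∈ Set.Icc (0:ℝ) 1 := by
  constructor
  · exact ENNReal.toReal_nonneg
  · rw [ordf_eq hR]
    have h1 : m (L R u) ≤ 1 := (measure_mono (Set.subset_univ _)).trans (le_of_eq m_univ)
    have := ENNReal.toReal_mono one_ne_top h1
    simpa using this

end ATO

namespace ATO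

section MP
variable (ν : Measure ℝ) [SigmaFinite ν]

noncomputable abbrev P3 (ν : Measure ℝ) : Measure (ℝ × ℝ × ℝ) := ν.prod (ν.prod ν)

lemma mp_assoc : MeasurePreserving (MeasurableEquiv.prodAssoc : (ℝ × ℝ) × ℝ ≃ᵐ ℝ × ℝ × ℝ)
    ((ν.prod ν).prod ν) (P3 ν) := measurePreserving_prodAssoc ν ν ν

-- T1 : (u,v,w) ↦ (w,u,v)
lemma mpT1 : MeasurePreserving (fun q : ℝ × ℝ × ℝ => ((q.2.2, q.1, q.2.1) : ℝ × ℝ × ℝ))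
    (P3 ν) (P3 ν) := by
  have h := (Measure.measurePreserving_swap (μ := ν.prod ν) (ν := ν)).comp (mp_assoc ν).symm
  have he : (fun q : ℝ × ℝ × ℝ => ((q.2.2, q.1, q.2.1) : ℝ × ℝ × ℝ))
      = (Prod.swap ∘ (MeasurableEquiv.prodAssoc : (ℝ × ℝ) × ℝ ≃ᵐ ℝ × ℝ × ℝ).symm) := by
    funext q; rfl
  rw [he]; exact h

-- T3 : (u,v,w) ↦ (u,w,v)
lemma mpT3 : MeasurePreserving (fun q : ℝ × ℝ × ℝ => ((q.1, q.2.2, q.2.1) : ℝ × ℝ × ℝ))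
    (P3 ν) (P3 ν) := by
  have h := (MeasurePreserving.id ν).prod (Measure.measurePreserving_swap (μ := ν) (ν := ν))
  have he : (fun q : ℝ × ℝ × ℝ => ((q.1, q.2.2, q.2.1) : ℝ × ℝ × ℝ))
      = Prod.map id Prod.swap := by funext q; rfl
  rw [he]; exact h

-- T2 : (u,v,w) ↦ (w,v,u)
lemma mpT2 : MeasurePreserving (fun q : ℝ × ℝ × ℝ => ((q.2.2, q.2.1, q.1) : ℝ × ℝ × ℝ))
    (P3 ν) (P3 ν) := by
  have h := (mpT3 ν).comp (mpT1 ν)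
  have he : (fun q : ℝ × ℝ × ℝ => ((q.2.2, q.2.1, q.1) : ℝ × ℝ × ℝ))
      = ((fun q : ℝ × ℝ × ℝ => ((q.1, q.2.2, q.2.1) : ℝ × ℝ × ℝ))
          ∘ (fun q : ℝ × ℝ × ℝ => ((q.2.2, q.1, q.2.1) : ℝ × ℝ × ℝ))) := by
    funext q; rfl
  rw [he]; exact h

-- T4 : (u,v,w) ↦ (v,u,w)
lemma mpT4 : MeasurePreserving (fun q : ℝ × ℝ × ℝ => ((q.2.1, q.1, q.2.2) : ℝ × ℝ × ℝ))
    (P3 ν) (P3 ν) := by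
  have h := ((mp_assoc ν).comp
      ((Measure.measurePreserving_swap (μ := ν) (ν := ν)).prod (MeasurePreserving.id ν))).comp (mp_assoc ν).symm
  have he : (fun q : ℝ × ℝ × ℝ => ((q.2.1, q.1, q.2.2) : ℝ × ℝ × ℝ))
      = ((MeasurableEquiv.prodAssoc : (ℝ × ℝ) × ℝ ≃ᵐ ℝ × ℝ × ℝ) ∘ Prod.map Prod.swap id
          ∘ (MeasurableEquiv.prodAssoc : (ℝ × ℝ) × ℝ ≃ᵐ ℝ × ℝ × ℝ).symm) := by
    funext q; rfl
  rw [he]; exact h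

-- T5 : (u,v,w) ↦ (v,w,u)
lemma mpT5 : MeasurePreserving (fun q : ℝ × ℝ × ℝ => ((q.2.1, q.2.2, q.1) : ℝ × ℝ × ℝ))
    (P3 ν) (P3 ν) := by
  have h := (mp_assoc ν).comp (Measure.measurePreserving_swap (μ := ν) (ν := ν.prod ν))
  have he : (fun q : ℝ × ℝ × ℝ => ((q.2.1, q.2.2, q.1) : ℝ × ℝ × ℝ))
      = ((MeasurableEquiv.prodAssoc : (ℝ × ℝ) × ℝ ≃ᵐ ℝ × ℝ × ℝ) ∘ Prod.swap) := by
    funext q; rfl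
  rw [he]; exact h

end MP

end ATO

namespace ATO

variable {R : Set (ℝ × ℝ)}

/-- incomparable pairs -/
def Sinc (R : Set (ℝ × ℝ)) : Set (ℝ × ℝ) := {p | p ∉ R ∧ (p.2, p.1) ∉ R}
/-- doubly related pairs -/
def Sant (R : Set (ℝ × ℝ)) : Set (ℝ × ℝ) := {p | p ∈ R ∧ (p.2, p.1) ∈ R}
/-- transitivity failures -/
def Str (R : Set (ℝ × ℝ)) : Set (ℝ × ℝ × ℝ) :=
  {q | (q.1, q.2.1) ∈ R ∧ (q.2.1, q.2.2) ∈ R ∧ (q.1, q.2.2) ∉ R}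

lemma measSwapR (hR : MeasurableSet R) : MeasurableSet {p : ℝ × ℝ | (p.2, p.1) ∈ R} :=
  (measurable_snd.prodMk measurable_fst) hR

lemma measSinc (hR : MeasurableSet R) : MeasurableSet (Sinc R) :=
  hR.compl.inter (measSwapR hR).compl

lemma measSant (hR : MeasurableSet R) : MeasurableSet (Sant R) :=
  hR.inter (measSwapR hR)

lemma measStr (hR : MeasurableSet R) : MeasurableSet (Str R) := by
  refine MeasurableSet.inter ?_ (MeasurableSet.inter ?_ ?_)
  · exact (measurable_fst.prodMk (measurable_fst.comp measurable_snd)) hR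
  · exact ((measurable_fst.comp measurable_snd).prodMk
      (measurable_snd.comp measurable_snd)) hR
  · exact ((measurable_fst.prodMk (measurable_snd.comp measurable_snd)) hR).compl

lemma m2_eq : m.prod m
    = (volume : Measure (ℝ × ℝ)).restrict (Set.Icc 0 1 ×ˢ Set.Icc 0 1) := by
  rw [m, Measure.prod_restrict, ← Measure.volume_eq_prod]

lemma m3_eq : P3 m = (volume : Measure (ℝ × ℝ × ℝ)).restrict
    (Set.Icc 0 1 ×ˢ Set.Icc 0 1 ×ˢ Set.Icc 0 1) := by
  rw [P3, m, Measure.prod_restrict, Measure.prod_restrict, ← Measure.volume_eq_prod,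
    ← Measure.volume_eq_prod]

lemma m2_null {S : Set (ℝ × ℝ)} (hS : MeasurableSet S)
    (h : volume {p : ℝ × ℝ | p.1 ∈ Set.Icc (0:ℝ) 1 ∧ p.2 ∈ Set.Icc (0:ℝ) 1 ∧ p ∈ S} = 0) :
    m.prod m S = 0 := by
  rw [m2_eq, Measure.restrict_apply hS]
  refine measure_mono_null ?_ h
  rintro p ⟨hp, hI⟩
  exact ⟨hI.1, hI.2, hp⟩

lemma m3_null {S : Set (ℝ × ℝ × ℝ)} (hS : MeasurableSet S)
    (h : volume {q : ℝ × ℝ × ℝ | q.1 ∈ Set.Icc (0:ℝ) 1 ∧ q.2.1 ∈ Set.Icc (0:ℝ) 1 ∧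
      q.2.2 ∈ Set.Icc (0:ℝ) 1 ∧ q ∈ S} = 0) :
    P3 m S = 0 := by
  rw [m3_eq, Measure.restrict_apply hS]
  refine measure_mono_null ?_ h
  rintro q ⟨hq, hI⟩
  exact ⟨hI.1, hI.2.1, hI.2.2, hq⟩

/-- product-level completeness -/
lemma Hcomp2 (hR : MeasurableSet R) (hato : IsAlmostTotalOrder R) :
    ∀ᵐ p ∂(m.prod m), p ∈ R ∨ (p.2, p.1) ∈ R := by
  have h0 : m.prod m (Sinc R) = 0 := m2_null (measSinc hR) hato.1
  filter_upwards [measure_eq_zero_iff_ae_notMem.mp h0] with p hp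
  by_contra hc
  push_neg at hc
  exact hp ⟨hc.1, hc.2⟩

/-- product-level antisymmetry -/
lemma Hanti2 (hR : MeasurableSet R) (hato : IsAlmostTotalOrder R) :
    ∀ᵐ p ∂(m.prod m), ¬(p ∈ R ∧ (p.2, p.1) ∈ R) :=
  measure_eq_zero_iff_ae_notMem.mp (m2_null (measSant hR) hato.2.1)

lemma Htr3 (hR : MeasurableSet R) (hato : IsAlmostTotalOrder R) : P3 m (Str R) = 0 :=
  m3_null (measStr hR) hato.2.2

section mpproj
variable {α β : Type*} [MeasurableSpace α] [MeasurableSpace β]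
  (μ : Measure α) (ν : Measure β) [IsProbabilityMeasure μ] [IsProbabilityMeasure ν]
  [SigmaFinite μ] [SigmaFinite ν]

lemma mp_fst : MeasurePreserving (Prod.fst : α × β → α) (μ.prod ν) μ :=
  ⟨measurable_fst, by rw [Measure.map_fst_prod]; simp⟩

lemma mp_snd : MeasurePreserving (Prod.snd : α × β → β) (μ.prod ν) ν :=
  ⟨measurable_snd, by rw [Measure.map_snd_prod]; simp⟩

end mpproj

/-- iterated completeness -/
lemma comp_ae (hR : MeasurableSet R) (hato : IsAlmostTotalOrder R) :
    ∀ᵐ u ∂m, ∀ᵐ v ∂m, (u, v) ∈ R ∨ (v, u) ∈ R :=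
  Measure.ae_ae_of_ae_prod (Hcomp2 hR hato)

/-- iterated antisymmetry -/
lemma anti_ae (hR : MeasurableSet R) (hato : IsAlmostTotalOrder R) :
    ∀ᵐ u ∂m, ∀ᵐ v ∂m, ¬((u, v) ∈ R ∧ (v, u) ∈ R) :=
  Measure.ae_ae_of_ae_prod (Hanti2 hR hato)

lemma trans_perm_ae (hR : MeasurableSet R) (hato : IsAlmostTotalOrder R)
    {T : ℝ × ℝ × ℝ → ℝ × ℝ × ℝ} (hT : MeasurePreserving T (P3 m) (P3 m)) :
    ∀ᵐ u ∂m, ∀ᵐ v ∂m, ∀ᵐ w ∂m, T (u, v, w) ∉ Str R := by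
  have h0 : P3 m (T ⁻¹' Str R) = 0 :=
    hT.quasiMeasurePreserving.preimage_null (Htr3 hR hato)
  have := Measure.ae_ae_of_ae_prod (measure_eq_zero_iff_ae_notMem.mp h0)
  filter_upwards [this] with u hu
  exact Measure.ae_ae_of_ae_prod hu

/-- trans in order (w,u,v) : w ≺ u ≺ v → w ≺ v -/
lemma trans_wuv (hR : MeasurableSet R) (hato : IsAlmostTotalOrder R) :
    ∀ᵐ u ∂m, ∀ᵐ v ∂m, ∀ᵐ w ∂m, (w, u) ∈ R → (u, v) ∈ R → (w, v) ∈ R := by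
  filter_upwards [trans_perm_ae hR hato (mpT1 m)] with u hu
  filter_upwards [hu] with v hv
  filter_upwards [hv] with w hw h1 h2
  by_contra hc
  exact hw ⟨h1, h2, hc⟩

/-- trans in order (w,v,u) : w ≺ v ≺ u → w ≺ u -/
lemma trans_wvu (hR : MeasurableSet R) (hato : IsAlmostTotalOrder R) :
    ∀ᵐ u ∂m, ∀ᵐ v ∂m, ∀ᵐ w ∂m, (w, v) ∈ R → (v, u) ∈ R → (w, u) ∈ R := by
  filter_upwards [trans_perm_ae hR hato (mpT2 m)] with u hu
  filter_upwards [hu] with v hv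
  filter_upwards [hv] with w hw h1 h2
  by_contra hc
  exact hw ⟨h1, h2, hc⟩

/-- trans in order (u,w,v) : u ≺ w ≺ v → u ≺ v -/
lemma trans_uwv (hR : MeasurableSet R) (hato : IsAlmostTotalOrder R) :
    ∀ᵐ u ∂m, ∀ᵐ v ∂m, ∀ᵐ w ∂m, (u, w) ∈ R → (w, v) ∈ R → (u, v) ∈ R := by
  filter_upwards [trans_perm_ae hR hato (mpT3 m)] with u hu
  filter_upwards [hu] with v hv
  filter_upwards [hv] with w hw h1 h2
  by_contra hc
  exact hw ⟨h1, h2, hc⟩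

end ATO

namespace ATO

variable {R : Set (ℝ × ℝ)}

/-- gap formula: for a.e. u ≺ v, m(L v) = m(L u) + m(M u v). -/
lemma gap (hR : MeasurableSet R) (hato : IsAlmostTotalOrder R) :
    ∀ᵐ u ∂m, ∀ᵐ v ∂m, (u, v) ∈ R → m (L R v) = m (L R u) + m (M R u v) := by
  have hcomp_uw : ∀ᵐ u ∂m, ∀ᵐ v ∂m, ∀ᵐ w ∂m, (u, w) ∈ R ∨ (w, u) ∈ R := by
    filter_upwards [comp_ae hR hato] with u hu
    exact ae_of_all _ fun v => hu
  have hanti_uw : ∀ᵐ u ∂m, ∀ᵐ v ∂m, ∀ᵐ w ∂m, ¬((u, w) ∈ R ∧ (w, u) ∈ R) := by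
    filter_upwards [anti_ae hR hato] with u hu
    exact ae_of_all _ fun v => hu
  filter_upwards [trans_wuv hR hato, hcomp_uw, hanti_uw] with u h1 h2 h3
  filter_upwards [h1, h2, h3] with v g1 g2 g3 huv
  have hsub : ∀ᵐ w ∂m, (w ∈ L R v ↔ w ∈ L R u ∪ M R u v) := by
    filter_upwards [g1, g2, g3] with w t1 t2 t3
    constructor
    · intro hwv
      rcases t2 with h | h
      · exact Or.inr ⟨h, hwv⟩
      · exact Or.inl h
    · rintro (h | h)
      · exact t1 h huv
      · exact h.2
  have hdisj : m (L R u ∩ M R u v) = 0 := by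
    rw [measure_eq_zero_iff_ae_notMem]
    filter_upwards [g3] with w t3 hw
    exact t3 ⟨hw.2.1, hw.1⟩
  calc m (L R v) = m (L R u ∪ M R u v) :=
        measure_congr (Filter.eventuallyEq_set.mpr hsub)
    _ = m (L R u) + m (M R u v) :=
        measure_union₀ (measM hR u v).nullMeasurableSet hdisj

/-- reversed gap formula in the same iterated order -/
lemma gap_rev (hR : MeasurableSet R) (hato : IsAlmostTotalOrder R) :
    ∀ᵐ u ∂m, ∀ᵐ v ∂m, (v, u) ∈ R → m (L R u) = m (L R v) + m (M R v u) := by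
  have hcomp_vw : ∀ᵐ u ∂m, ∀ᵐ v ∂m, ∀ᵐ w ∂m, (v, w) ∈ R ∨ (w, v) ∈ R :=
    ae_of_all _ fun u => comp_ae hR hato
  have hanti_vw : ∀ᵐ u ∂m, ∀ᵐ v ∂m, ∀ᵐ w ∂m, ¬((v, w) ∈ R ∧ (w, v) ∈ R) :=
    ae_of_all _ fun u => anti_ae hR hato
  filter_upwards [trans_wvu hR hato, hcomp_vw, hanti_vw] with u h1 h2 h3
  filter_upwards [h1, h2, h3] with v g1 g2 g3 hvu
  have hsub : ∀ᵐ w ∂m, (w ∈ L R u ↔ w ∈ L R v ∪ M R v u) := by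
    filter_upwards [g1, g2, g3] with w t1 t2 t3
    constructor
    · intro hwu
      rcases t2 with h | h
      · exact Or.inr ⟨h, hwu⟩
      · exact Or.inl h
    · rintro (h | h)
      · exact t1 h hvu
      · exact h.2
  have hdisj : m (L R v ∩ M R v u) = 0 := by
    rw [measure_eq_zero_iff_ae_notMem]
    filter_upwards [g3] with w t3 hw
    exact t3 ⟨hw.2.1, hw.1⟩
  calc m (L R u) = m (L R v ∪ M R v u) :=
        measure_congr (Filter.eventuallyEq_set.mpr hsub)
    _ = m (L R v) + m (M R v u) :=
        measure_union₀ (measM hR v u).nullMeasurableSet hdisj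

lemma gap_f (hR : MeasurableSet R) (hato : IsAlmostTotalOrder R) :
    ∀ᵐ u ∂m, ∀ᵐ v ∂m, (u, v) ∈ R →
      ordf R v = ordf R u + (m (M R u v)).toReal := by
  filter_upwards [gap hR hato] with u hu
  filter_upwards [hu] with v hv huv
  rw [ordf_eq hR, ordf_eq hR, hv huv,
    ENNReal.toReal_add (mL_ne_top hR u) (measure_ne_top _ _)]

end ATO

namespace ATO

variable {R : Set (ℝ × ℝ)}

/-- restriction helper -/
lemma res2 {E : Set ℝ} {P : ℝ → ℝ → Prop} (h : ∀ᵐ u ∂m, ∀ᵐ v ∂m, P u v) :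
    ∀ᵐ u ∂(m.restrict E), ∀ᵐ v ∂(m.restrict E), P u v :=
  ae_restrict_of_ae (h.mono fun _ hu => ae_restrict_of_ae hu)

lemma res3 {E : Set ℝ} {P : ℝ → ℝ → ℝ → Prop} (h : ∀ᵐ u ∂m, ∀ᵐ v ∂m, ∀ᵐ w ∂m, P u v w) :
    ∀ᵐ u ∂(m.restrict E), ∀ᵐ v ∂(m.restrict E), ∀ᵐ w ∂(m.restrict E), P u v w :=
  ae_restrict_of_ae (h.mono fun _ hu =>
    ae_restrict_of_ae (hu.mono fun _ hv => ae_restrict_of_ae hv))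

/-- product-level comparability on triples, via a measure preserving projection -/
lemma comp3 (hR : MeasurableSet R) (hato : IsAlmostTotalOrder R)
    {g : ℝ × ℝ × ℝ → ℝ × ℝ} (hg : MeasurePreserving g (P3 m) (m.prod m)) :
    ∀ᵐ q ∂(P3 m), (g q ∈ R ∨ ((g q).2, (g q).1) ∈ R) := by
  have h0 : P3 m (g ⁻¹' (Sinc R)) = 0 :=
    hg.quasiMeasurePreserving.preimage_null (m2_null (measSinc hR) hato.1)
  filter_upwards [measure_eq_zero_iff_ae_notMem.mp h0] with q hq
  by_contra hc
  push_neg at hc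
  exact hq ⟨hc.1, hc.2⟩

theorem level_null (hR : MeasurableSet R) (hato : IsAlmostTotalOrder R) (t : ℝ) :
    volume {u : ℝ | u ∈ Set.Icc (0:ℝ) 1 ∧ ordf R u = t} = 0 := by
  classical
  by_contra hpos
  set E : Set ℝ := {u : ℝ | u ∈ Set.Icc (0:ℝ) 1 ∧ ordf R u = t} with hEdef
  have hEmeas : MeasurableSet E := by
    have : E = Set.Icc (0:ℝ) 1 ∩ ordf R ⁻¹' {t} := by
      ext u; simp [hEdef]
    rw [this]
    exact measurableSet_Icc.inter ((measurable_ordf hR) (measurableSet_singleton t))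
  have hmE : m E = volume E := by
    rw [m, Measure.restrict_apply hEmeas, Set.inter_eq_left.mpr fun u hu => hu.1]
  have hmE0 : m E ≠ 0 := by rw [hmE]; exact hpos
  set κ : Measure ℝ := m.restrict E with hκdef
  -- the indicator kernel
  set χ : ℝ → ℝ → ℝ≥0∞ := fun a b => if (a, b) ∈ R then 1 else 0 with hχdef
  have hbase : Measurable (fun p : ℝ × ℝ => if p ∈ R then (1:ℝ≥0∞) else 0) :=
    Measurable.ite hR measurable_const measurable_const
  set ψ : ℝ × ℝ × ℝ → ℝ≥0∞ := fun q => χ q.1 q.2.1 * χ q.2.1 q.2.2 with hψdef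
  have hψm : Measurable ψ := by
    apply Measurable.mul
    · exact hbase.comp (measurable_fst.prodMk (measurable_fst.comp measurable_snd))
    · exact hbase.comp ((measurable_fst.comp measurable_snd).prodMk
        (measurable_snd.comp measurable_snd))
  -- the six permuted versions
  have hψm1 : Measurable fun q : ℝ × ℝ × ℝ => ψ (q.1, q.2.2, q.2.1) :=
    hψm.comp (mpT3 m).measurable
  have hψm2 : Measurable fun q : ℝ × ℝ × ℝ => ψ (q.2.1, q.1, q.2.2) :=
    hψm.comp (mpT4 m).measurable
  have hψm3 : Measurable fun q : ℝ × ℝ × ℝ => ψ (q.2.1, q.2.2, q.1) :=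
    hψm.comp (mpT5 m).measurable
  have hψm4 : Measurable fun q : ℝ × ℝ × ℝ => ψ (q.2.2, q.1, q.2.1) :=
    hψm.comp (mpT1 m).measurable
  have hψm5 : Measurable fun q : ℝ × ℝ × ℝ => ψ (q.2.2, q.2.1, q.1) :=
    hψm.comp (mpT2 m).measurable
  have hP3κ : P3 κ = (P3 m).restrict (E ×ˢ E ×ˢ E) := by
    rw [P3, hκdef, Measure.prod_restrict, Measure.prod_restrict]
  -- comparability of the three pairs, a.e. on the cube
  have hc12 : ∀ᵐ q ∂(P3 κ), (q.1, q.2.1) ∈ R ∨ (q.2.1, q.1) ∈ R := by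
    rw [hP3κ]
    exact ae_restrict_of_ae
      (comp3 hR hato ((MeasurePreserving.id m).prod (mp_fst m m)))
  have hc23 : ∀ᵐ q ∂(P3 κ), (q.2.1, q.2.2) ∈ R ∨ (q.2.2, q.2.1) ∈ R := by
    rw [hP3κ]
    exact ae_restrict_of_ae (comp3 hR hato (mp_snd m (m.prod m)))
  have hc13 : ∀ᵐ q ∂(P3 κ), (q.1, q.2.2) ∈ R ∨ (q.2.2, q.1) ∈ R := by
    rw [hP3κ]
    exact ae_restrict_of_ae
      (comp3 hR hato ((MeasurePreserving.id m).prod (mp_snd m m)))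
  -- a.e. pointwise bound by the sum over the six orderings
  have hsum : ∀ᵐ q ∂(P3 κ), (1:ℝ≥0∞) ≤
      ψ q + ψ (q.1, q.2.2, q.2.1) + ψ (q.2.1, q.1, q.2.2) + ψ (q.2.1, q.2.2, q.1)
        + ψ (q.2.2, q.1, q.2.1) + ψ (q.2.2, q.2.1, q.1) := by
    filter_upwards [hc12, hc23, hc13] with q h12 h23 h13
    rcases h12 with hab | hba <;> rcases h23 with hbc | hcb
    · have he : ψ q = 1 := by simp [hψdef, hχdef, hab, hbc]
      calc (1:ℝ≥0∞) = ψ q := he.symm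
        _ ≤ _ := by
          exact ((((le_self_add).trans le_self_add).trans le_self_add).trans
            le_self_add).trans le_self_add
    · rcases h13 with hac | hca
      · have he : ψ (q.1, q.2.2, q.2.1) = 1 := by simp [hψdef, hχdef, hac, hcb]
        calc (1:ℝ≥0∞) = ψ (q.1, q.2.2, q.2.1) := he.symm
          _ ≤ _ := by
            exact (((le_add_self.trans le_self_add).trans le_self_add).trans
              le_self_add).trans le_self_add
      · have he : ψ (q.2.2, q.1, q.2.1) = 1 := by simp [hψdef, hχdef, hca, hab]
        calc (1:ℝ≥0∞) = ψ (q.2.2, q.1, q.2.1) := he.symm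
          _ ≤ _ := le_add_self.trans le_self_add
    · rcases h13 with hac | hca
      · have he : ψ (q.2.1, q.1, q.2.2) = 1 := by simp [hψdef, hχdef, hba, hac]
        calc (1:ℝ≥0∞) = ψ (q.2.1, q.1, q.2.2) := he.symm
          _ ≤ _ := ((le_add_self.trans le_self_add).trans le_self_add).trans le_self_add
      · have he : ψ (q.2.1, q.2.2, q.1) = 1 := by simp [hψdef, hχdef, hba, hbc, hca]
        calc (1:ℝ≥0∞) = ψ (q.2.1, q.2.2, q.1) := he.symm
          _ ≤ _ := (le_add_self.trans le_self_add).trans le_self_add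
    · have he : ψ (q.2.2, q.2.1, q.1) = 1 := by simp [hψdef, hχdef, hcb, hba]
      calc (1:ℝ≥0∞) = ψ (q.2.2, q.2.1, q.1) := he.symm
        _ ≤ _ := le_add_self
  -- integrate the bound
  set J : ℝ≥0∞ := ∫⁻ q, ψ q ∂(P3 κ) with hJdef
  have hints : P3 κ Set.univ ≤ 6 * J := by
    have h1 : P3 κ Set.univ = ∫⁻ _, (1:ℝ≥0∞) ∂(P3 κ) := lintegral_one.symm
    rw [h1]
    have h2 := lintegral_mono_ae hsum
    refine h2.trans (le_of_eq ?_)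
    rw [lintegral_add_left (f := fun a => ψ a + ψ (a.1, a.2.2, a.2.1) + ψ (a.2.1, a.1, a.2.2)
        + ψ (a.2.1, a.2.2, a.1) + ψ (a.2.2, a.1, a.2.1))
        ((((hψm.add hψm1).add hψm2).add hψm3).add hψm4),
      lintegral_add_left (f := fun a => ψ a + ψ (a.1, a.2.2, a.2.1) + ψ (a.2.1, a.1, a.2.2)
        + ψ (a.2.1, a.2.2, a.1)) (((hψm.add hψm1).add hψm2).add hψm3),
      lintegral_add_left (f := fun a => ψ a + ψ (a.1, a.2.2, a.2.1) + ψ (a.2.1, a.1, a.2.2))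
        ((hψm.add hψm1).add hψm2),
      lintegral_add_left (f := fun a => ψ a + ψ (a.1, a.2.2, a.2.1)) (hψm.add hψm1),
      lintegral_add_left hψm]
    rw [(mpT3 κ).lintegral_comp hψm, (mpT4 κ).lintegral_comp hψm,
      (mpT5 κ).lintegral_comp hψm, (mpT1 κ).lintegral_comp hψm,
      (mpT2 κ).lintegral_comp hψm]
    rw [← hJdef]
    ring
  have hPuniv : P3 κ Set.univ = m E * (m E * m E) := by
    rw [← Set.univ_prod_univ, Measure.prod_prod, ← Set.univ_prod_univ,
      Measure.prod_prod, hκdef, Measure.restrict_apply_univ]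
  have hJ0 : J ≠ 0 := by
    intro h0
    rw [h0, mul_zero, hPuniv] at hints
    have := le_antisymm hints (zero_le)
    exact hmE0 (by
      rcases mul_eq_zero.mp this with h | h
      · exact h
      · rcases mul_eq_zero.mp h with h' | h' <;> exact h')
  -- reorder to (a, c, b)
  have hJ2 : (∫⁻ a, ∫⁻ c, ∫⁻ b, χ a b * χ b c ∂κ ∂κ ∂κ) ≠ 0 := by
    have hTJ : ∫⁻ q, ψ (q.1, q.2.2, q.2.1) ∂(P3 κ) = J := (mpT3 κ).lintegral_comp hψm
    have hiter : ∫⁻ q, ψ (q.1, q.2.2, q.2.1) ∂(P3 κ)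
        = ∫⁻ a, ∫⁻ c, ∫⁻ b, χ a b * χ b c ∂κ ∂κ ∂κ := by
      rw [lintegral_prod _ hψm1.aemeasurable]
      refine lintegral_congr fun a => ?_
      have hsec : Measurable fun p : ℝ × ℝ => ψ (a, p.2, p.1) := by
        apply hψm.comp
        exact measurable_const.prodMk (measurable_snd.prodMk measurable_fst)
      rw [lintegral_prod _ hsec.aemeasurable]
    rw [← hiter, hTJ]
    exact hJ0
  -- good a.e. properties
  have hgoodc : ∀ᵐ a ∂κ, ∀ᵐ c ∂κ,
      (c ∈ E ∧ ((a, c) ∈ R → m (L R c) = m (L R a) + m (M R a c))) := by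
    have hgap := res2 (E := E) (gap hR hato)
    filter_upwards [hgap] with a ha
    filter_upwards [ha, ae_restrict_mem hEmeas] with c hc hcE
    exact ⟨hcE, hc⟩
  have hgoodb : ∀ᵐ a ∂κ, ∀ᵐ c ∂κ, ∀ᵐ b ∂κ,
      ((a, b) ∈ R → (b, c) ∈ R → (a, c) ∈ R) := res3 (E := E) (trans_uwv hR hato)
  -- sample a
  have hfa : ∃ᵐ a ∂κ, (∫⁻ c, ∫⁻ b, χ a b * χ b c ∂κ ∂κ) ≠ 0 := by
    by_contra hcon
    rw [Filter.not_frequently] at hcon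
    have : (∫⁻ a, ∫⁻ c, ∫⁻ b, χ a b * χ b c ∂κ ∂κ ∂κ) = 0 := by
      have : ∀ᵐ a ∂κ, (∫⁻ c, ∫⁻ b, χ a b * χ b c ∂κ ∂κ) = 0 := by
        filter_upwards [hcon] with a ha
        simpa using ha
      rw [lintegral_congr_ae this, lintegral_zero]
    exact hJ2 this
  obtain ⟨a, hane, haE, hagood, habgood⟩ :=
    (hfa.and_eventually ((ae_restrict_mem hEmeas).and (hgoodc.and hgoodb))).exists
  -- sample c
  have hfc : ∃ᵐ c ∂κ, (∫⁻ b, χ a b * χ b c ∂κ) ≠ 0 := by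
    by_contra hcon
    rw [Filter.not_frequently] at hcon
    have : (∫⁻ c, ∫⁻ b, χ a b * χ b c ∂κ ∂κ) = 0 := by
      have : ∀ᵐ c ∂κ, (∫⁻ b, χ a b * χ b c ∂κ) = 0 := by
        filter_upwards [hcon] with c hc
        simpa using hc
      rw [lintegral_congr_ae this, lintegral_zero]
    exact hane this
  obtain ⟨c, hcne, ⟨hcE, hgapac⟩, hbgood⟩ := (hfc.and_eventually (hagood.and habgood)).exists
  -- the inner integral equals κ (M R a c)
  have hindM : (∫⁻ b, χ a b * χ b c ∂κ) = κ (M R a c) := by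
    rw [← lintegral_indicator_one (measM hR a c)]
    refine lintegral_congr fun b => ?_
    by_cases h1 : (a, b) ∈ R <;> by_cases h2 : (b, c) ∈ R <;>
      simp [hχdef, h1, h2, M, Set.indicator_apply, Set.mem_setOf_eq]
  have hκM : κ (M R a c) ≠ 0 := fun h0 => hcne (hindM.trans h0)
  have hmM : m (M R a c) ≠ 0 := by
    intro h0
    exact hκM (le_antisymm (le_trans (Measure.restrict_le_self _) h0.le) (zero_le))
  -- (a, c) ∈ R
  have hac : (a, c) ∈ R := by
    have hex : ∃ᵐ b ∂κ, b ∈ M R a c := frequently_ae_mem_iff.mpr hκM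
    obtain ⟨b, hbM, hbtr⟩ := (hex.and_eventually hbgood).exists
    exact hbtr hbM.1 hbM.2
  -- contradiction with ordf a = ordf c = t
  have hgap' : ordf R c = ordf R a + (m (M R a c)).toReal := by
    rw [ordf_eq hR, ordf_eq hR, hgapac hac,
      ENNReal.toReal_add (mL_ne_top hR a) (measure_ne_top _ _)]
  have hposM : 0 < (m (M R a c)).toReal :=
    ENNReal.toReal_pos hmM (measure_ne_top _ _)
  rw [haE.2, hcE.2] at hgap'
  linarith

end ATO

namespace ATO

variable {R : Set (ℝ × ℝ)}

lemma gap_rev_f (hR : MeasurableSet R) (hato : IsAlmostTotalOrder R) :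
    ∀ᵐ u ∂m, ∀ᵐ v ∂m, (v, u) ∈ R →
      ordf R u = ordf R v + (m (M R v u)).toReal := by
  filter_upwards [gap_rev hR hato] with u hu
  filter_upwards [hu] with v hv hvu
  rw [ordf_eq hR, ordf_eq hR, hv hvu,
    ENNReal.toReal_add (mL_ne_top hR v) (measure_ne_top _ _)]

lemma main_ae (hR : MeasurableSet R) (hato : IsAlmostTotalOrder R) :
    ∀ᵐ u ∂m, ∀ᵐ v ∂m, ((u, v) ∈ R ↔ ordf R u < ordf R v) := by
  have hne : ∀ᵐ u ∂m, ∀ᵐ v ∂m, ¬ (ordf R v = ordf R u) := by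
    refine ae_of_all _ fun u => ?_
    have h0 : m {v : ℝ | ordf R v = ordf R u} = 0 := by
      have hmeas : MeasurableSet {v : ℝ | ordf R v = ordf R u} :=
        (measurable_ordf hR) (measurableSet_singleton (ordf R u))
      rw [m, Measure.restrict_apply hmeas]
      refine measure_mono_null ?_ (level_null hR hato (ordf R u))
      rintro v ⟨hv1, hv2⟩
      exact ⟨hv2, hv1⟩
    exact measure_eq_zero_iff_ae_notMem.mp h0
  filter_upwards [gap_f hR hato, gap_rev_f hR hato, comp_ae hR hato, hne] with u h1 h2 h3 h4
  filter_upwards [h1, h2, h3, h4] with v g1 g2 g3 g4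
  constructor
  · intro huv
    have he := g1 huv
    have hle : ordf R u ≤ ordf R v := by
      rw [he]
      linarith [ENNReal.toReal_nonneg (a := m (M R u v))]
    exact hle.lt_of_ne fun h => g4 h.symm
  · intro hlt
    rcases g3 with h | h
    · exact h
    · exfalso
      have := g2 h
      linarith [ENNReal.toReal_nonneg (a := m (M R v u))]

lemma null_pair {S : Set (ℝ × ℝ)} (hS : MeasurableSet S)
    (h : ∀ᵐ u ∂m, ∀ᵐ v ∂m, (u, v) ∉ S) :
    volume {p : ℝ × ℝ | p.1 ∈ Set.Icc (0:ℝ) 1 ∧ p.2 ∈ Set.Icc (0:ℝ) 1 ∧ p ∈ S} = 0 := by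
  have h2 : m.prod m S = 0 := by
    rw [measure_eq_zero_iff_ae_notMem]
    exact (Measure.ae_prod_iff_ae_ae (p := fun z => z ∉ S) hS.compl).mpr h
  rw [m2_eq, Measure.restrict_apply hS] at h2
  refine measure_mono_null ?_ h2
  rintro p ⟨h1', h2', h3'⟩
  exact ⟨h3', h1', h2'⟩

lemma part5 (hR : MeasurableSet R) (hato : IsAlmostTotalOrder R) :
    volume {p : ℝ × ℝ | p.1 ∈ Set.Icc (0:ℝ) 1 ∧ p.2 ∈ Set.Icc (0:ℝ) 1 ∧
      ¬((p ∈ R) ↔ ordf R p.1 < ordf R p.2)} = 0 := by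
  have h1 : MeasurableSet {p : ℝ × ℝ | ordf R p.1 < ordf R p.2} :=
    measurableSet_lt ((measurable_ordf hR).comp measurable_fst)
      ((measurable_ordf hR).comp measurable_snd)
  have hS : MeasurableSet {p : ℝ × ℝ | ¬((p ∈ R) ↔ ordf R p.1 < ordf R p.2)} := by
    have he : {p : ℝ × ℝ | ¬((p ∈ R) ↔ ordf R p.1 < ordf R p.2)}
        = (R ∩ {p : ℝ × ℝ | ordf R p.1 < ordf R p.2}ᶜ)
          ∪ (Rᶜ ∩ {p : ℝ × ℝ | ordf R p.1 < ordf R p.2}) := by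
      ext p
      by_cases hp : p ∈ R <;> by_cases hq : ordf R p.1 < ordf R p.2 <;>
        simp [hp, hq]
    rw [he]
    exact (hR.inter h1.compl).union (hR.compl.inter h1)
  refine null_pair hS ?_
  filter_upwards [main_ae hR hato] with u hu
  filter_upwards [hu] with v hv
  exact fun hc => hc hv

end ATO

namespace ATO

variable {R : Set (ℝ × ℝ)}

lemma meas_split (ρ : Measure ℝ) {a b : ℝ} (h : a ≤ b) :
    ρ (Set.Iic b) = ρ (Set.Iic a) + ρ (Set.Ioc a b) := by
  rw [← Set.Iic_union_Ioc_eq_Iic h,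
    measure_union (Set.Iic_disjoint_Ioc le_rfl) measurableSet_Ioc]

lemma measBad (hR : MeasurableSet R) :
    MeasurableSet {p : ℝ × ℝ | ¬((p ∈ R) ↔ ordf R p.1 < ordf R p.2)} := by
  have h1 : MeasurableSet {p : ℝ × ℝ | ordf R p.1 < ordf R p.2} :=
    measurableSet_lt ((measurable_ordf hR).comp measurable_fst)
      ((measurable_ordf hR).comp measurable_snd)
  have he : {p : ℝ × ℝ | ¬((p ∈ R) ↔ ordf R p.1 < ordf R p.2)}
      = (R ∩ {p : ℝ × ℝ | ordf R p.1 < ordf R p.2}ᶜ)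
        ∪ (Rᶜ ∩ {p : ℝ × ℝ | ordf R p.1 < ordf R p.2}) := by
    ext p
    by_cases hp : p ∈ R <;> by_cases hq : ordf R p.1 < ordf R p.2 <;> simp [hp, hq]
  rw [he]
  exact (hR.inter h1.compl).union (hR.compl.inter h1)

lemma main_ae_swap (hR : MeasurableSet R) (hato : IsAlmostTotalOrder R) :
    ∀ᵐ x ∂m, ∀ᵐ w ∂m, ((w, x) ∈ R ↔ ordf R w < ordf R x) := by
  set S : Set (ℝ × ℝ) := {p : ℝ × ℝ | ¬((p ∈ R) ↔ ordf R p.1 < ordf R p.2)} with hSdef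
  have hS : MeasurableSet S := measBad hR
  have h2 : m.prod m S = 0 := by
    rw [measure_eq_zero_iff_ae_notMem]
    refine (Measure.ae_prod_iff_ae_ae (p := fun z => z ∉ S) hS.compl).mpr ?_
    filter_upwards [main_ae hR hato] with u hu
    filter_upwards [hu] with v hv
    exact fun hc => hc hv
  have h3 : m.prod m (Prod.swap ⁻¹' S) = 0 :=
    (Measure.measurePreserving_swap (μ := m) (ν := m)).quasiMeasurePreserving.preimage_null h2
  have h4 := Measure.ae_ae_of_ae_prod (measure_eq_zero_iff_ae_notMem.mp h3)
  filter_upwards [h4] with x hx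
  filter_upwards [hx] with w hw
  by_contra hc
  exact hw hc

/-- a.e. `x`, the distribution function of `ordf` evaluated at `ordf x` is `ordf x`. -/
lemma F_fixed (hR : MeasurableSet R) (hato : IsAlmostTotalOrder R) :
    ∀ᵐ x ∂m, m {w : ℝ | ordf R w ≤ ordf R x} = ENNReal.ofReal (ordf R x) := by
  have hlev : ∀ c : ℝ, m {w : ℝ | ordf R w = c} = 0 := by
    intro c
    have hmeas : MeasurableSet {v : ℝ | ordf R v = c} :=
      (measurable_ordf hR) (measurableSet_singleton c)
    rw [m, Measure.restrict_apply hmeas]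
    refine measure_mono_null ?_ (level_null hR hato c)
    rintro v ⟨hv1, hv2⟩
    exact ⟨hv2, hv1⟩
  filter_upwards [main_ae_swap hR hato] with x hx
  have h1 : m (L R x) = m {w : ℝ | ordf R w < ordf R x} := by
    refine measure_congr (Filter.eventuallyEq_set.mpr ?_)
    filter_upwards [hx] with w hw
    exact hw
  have h2 : m {w : ℝ | ordf R w ≤ ordf R x} = m {w : ℝ | ordf R w < ordf R x} := by
    have hsub2 : {w : ℝ | ordf R w < ordf R x} ⊆ {w : ℝ | ordf R w ≤ ordf R x} := by
      intro w hw
      simp only [Set.mem_setOf_eq] at hw ⊢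
      exact le_of_lt hw
    refine le_antisymm ?_ (measure_mono hsub2)
    have hsub : {w : ℝ | ordf R w ≤ ordf R x}
        ⊆ {w : ℝ | ordf R w < ordf R x} ∪ {w : ℝ | ordf R w = ordf R x} := by
      intro w hw
      simp only [Set.mem_setOf_eq] at hw
      simp only [Set.mem_union, Set.mem_setOf_eq]
      rcases lt_or_eq_of_le hw with h | h
      · exact Or.inl h
      · exact Or.inr h
    refine (measure_mono hsub).trans ?_
    refine (measure_union_le _ _).trans ?_
    rw [hlev (ordf R x), add_zero]
  rw [h2, ← h1, ofReal_ordf hR]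

/-- the distribution of `ordf` under `m` is `m` itself. -/
lemma part3 (hR : MeasurableSet R) (hato : IsAlmostTotalOrder R) :
    Measure.map (ordf R) m = m := by
  set f := ordf R with hfdef
  have hf : Measurable f := measurable_ordf hR
  set ν : Measure ℝ := Measure.map f m
  have hmap : ∀ {s : Set ℝ}, MeasurableSet s → ν s = m (f ⁻¹' s) := fun hs =>
    Measure.map_apply hf hs
  haveI hν1 : IsProbabilityMeasure ν := Measure.isProbabilityMeasure_map hf.aemeasurable
  have hνIic : ∀ s : ℝ, ν (Set.Iic s) = m {w : ℝ | f w ≤ s} := fun s =>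
    hmap measurableSet_Iic
  have hatom : ∀ t : ℝ, ν {t} = 0 := by
    intro t
    rw [hmap (measurableSet_singleton t)]
    have hmeas : MeasurableSet {v : ℝ | ordf R v = t} :=
      (measurable_ordf hR) (measurableSet_singleton t)
    have he : f ⁻¹' {t} = {v : ℝ | ordf R v = t} := rfl
    rw [he, m, Measure.restrict_apply hmeas]
    refine measure_mono_null ?_ (level_null hR hato t)
    rintro v ⟨hv1, hv2⟩
    exact ⟨hv2, hv1⟩
  have hsupp : ν (Set.Icc (0:ℝ) 1)ᶜ = 0 := by
    rw [hmap measurableSet_Icc.compl]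
    have he : f ⁻¹' (Set.Icc (0:ℝ) 1)ᶜ = ∅ := by
      ext x
      simp only [Set.mem_preimage, Set.mem_compl_iff, Set.mem_empty_iff_false, iff_false,
        not_not]
      exact ordf_mem_Icc hR x
    rw [he, measure_empty]
  -- the set where the cdf is the identity
  set A : Set ℝ := {t : ℝ | ν (Set.Iic t) = ENNReal.ofReal t} with hAdef
  have hFmeas : Measurable fun t : ℝ => ν (Set.Iic t) := by
    have hmono : Monotone fun t : ℝ => ν (Set.Iic t) := fun a b hab =>
      measure_mono (Set.Iic_subset_Iic.mpr hab)
    exact hmono.measurable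
  have hAmeas : MeasurableSet A := by
    have he : A = {t : ℝ | ν (Set.Iic t) ≤ ENNReal.ofReal t}
        ∩ {t : ℝ | ENNReal.ofReal t ≤ ν (Set.Iic t)} := by
      ext t
      simp only [hAdef, Set.mem_setOf_eq, Set.mem_inter_iff]
      exact le_antisymm_iff
    rw [he]
    exact (measurableSet_le hFmeas ENNReal.measurable_ofReal).inter
      (measurableSet_le ENNReal.measurable_ofReal hFmeas)
  have hAc : ν Aᶜ = 0 := by
    have hae : ∀ᵐ x ∂m, f x ∈ A := by
      filter_upwards [F_fixed hR hato] with x hx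
      show ν (Set.Iic (f x)) = ENNReal.ofReal (f x)
      rw [hνIic (f x)]
      exact hx
    rw [hmap hAmeas.compl, measure_eq_zero_iff_ae_notMem]
    filter_upwards [hae] with x hx
    exact fun hc => hc hx
  -- key identity on [0,1]
  have key : ∀ s : ℝ, s ∈ Set.Icc (0:ℝ) 1 → ν (Set.Iic s) = ENNReal.ofReal s := by
    intro s hs
    set c : ℝ := (ν (Set.Iic s)).toReal with hcdef
    have hFs : ν (Set.Iic s) = ENNReal.ofReal c :=
      (ENNReal.ofReal_toReal (measure_ne_top _ _)).symm
    have hc0 : (0:ℝ) ≤ c := ENNReal.toReal_nonneg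
    have hc1 : c ≤ 1 := by
      have h := prob_le_one (μ := ν) (s := Set.Iic s)
      have := ENNReal.toReal_mono one_ne_top h
      simpa using this
    -- A avoids the open interval between s and c
    have hIoo0 : ν (Set.Ioo (min s c) (max s c)) = 0 := by
      refine measure_mono_null ?_ hAc
      intro t ht
      simp only [Set.mem_compl_iff]
      intro htA
      have htid : ν (Set.Iic t) = ENNReal.ofReal t := htA
      have ht0 : (0:ℝ) ≤ t := (le_min hs.1 hc0).trans ht.1.le
      rcases le_or_gt t s with h | h
      · have hmle : ν (Set.Iic t) ≤ ν (Set.Iic s) :=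
          measure_mono (Set.Iic_subset_Iic.mpr h)
        rw [htid, hFs] at hmle
        have htc : t ≤ c := (ENNReal.ofReal_le_ofReal_iff hc0).mp hmle
        exact absurd ht.1 (not_lt.mpr (le_min h htc))
      · have hmle : ν (Set.Iic s) ≤ ν (Set.Iic t) :=
          measure_mono (Set.Iic_subset_Iic.mpr h.le)
        rw [htid, hFs] at hmle
        have hct : c ≤ t := (ENNReal.ofReal_le_ofReal_iff ht0).mp hmle
        exact absurd ht.2 (not_lt.mpr (max_le h.le hct))
    -- F c = F s
    have hFc : ν (Set.Iic c) = ν (Set.Iic s) := by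
      rcases le_total c s with h | h
      · have h1 : ν (Set.Ioc c s) = 0 := by
          refine measure_mono_null (fun t ht => ?_)
            (measure_union_null hIoo0 (hatom s))
          rcases eq_or_lt_of_le ht.2 with he | hlt
          · exact Or.inr (by simp [he])
          · exact Or.inl ⟨by simpa [min_eq_right h] using ht.1,
              by simpa [max_eq_left h] using hlt⟩
        rw [meas_split ν h, h1, add_zero]
      · have h1 : ν (Set.Ioc s c) = 0 := by
          refine measure_mono_null (fun t ht => ?_)
            (measure_union_null hIoo0 (hatom c))
          rcases eq_or_lt_of_le ht.2 with he | hlt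
          · exact Or.inr (by simp [he])
          · exact Or.inl ⟨by simpa [min_eq_left h] using ht.1,
              by simpa [max_eq_right h] using hlt⟩
        rw [meas_split ν h, h1, add_zero]
    rcases lt_trichotomy c s with hlt | heq | hgt
    · -- c < s : impossible
      exfalso
      have hup : ν (Set.Ioc s 1 ∩ A) ≠ 0 := by
        intro h0
        have h2 : ν (Set.Ioc s 1) = 0 := by
          have hb : ν (Set.Ioc s 1) ≤ ν (Set.Ioc s 1 ∩ A) + ν Aᶜ := by
            refine (measure_mono (fun t ht => ?_)).trans (measure_union_le _ _)
            by_cases htA : t ∈ A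
            · exact Or.inl ⟨ht, htA⟩
            · exact Or.inr htA
          simpa [h0, hAc] using hb
        have h1le : (1:ℝ≥0∞) ≤ ν (Set.Iic s) + ν (Set.Ioc s 1) + ν (Set.Icc 0 1)ᶜ := by
          have hcover : (Set.univ : Set ℝ) ⊆ Set.Iic s ∪ Set.Ioc s 1 ∪ (Set.Icc 0 1)ᶜ := by
            intro t _
            rcases le_or_gt t s with h | h
            · exact Or.inl (Or.inl h)
            · rcases le_or_gt t 1 with h' | h'
              · exact Or.inl (Or.inr ⟨h, h'⟩)
              · exact Or.inr fun hc => absurd hc.2 (not_le.mpr h')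
          calc (1:ℝ≥0∞) = ν Set.univ := measure_univ.symm
            _ ≤ ν (Set.Iic s ∪ Set.Ioc s 1 ∪ (Set.Icc 0 1)ᶜ) := measure_mono hcover
            _ ≤ ν (Set.Iic s ∪ Set.Ioc s 1) + ν (Set.Icc 0 1)ᶜ := measure_union_le _ _
            _ ≤ ν (Set.Iic s) + ν (Set.Ioc s 1) + ν (Set.Icc 0 1)ᶜ := by
                exact add_le_add (measure_union_le _ _) le_rfl
        rw [hFs, h2, hsupp, add_zero, add_zero] at h1le
        have : ENNReal.ofReal c < 1 := ENNReal.ofReal_lt_one.mpr (lt_of_lt_of_le hlt hs.2)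
        exact absurd h1le (not_le.mpr this)
      have hSne : (Set.Ioc s 1 ∩ A).Nonempty := nonempty_of_measure_ne_zero hup
      have hbdd : BddBelow (Set.Ioc s 1 ∩ A) := ⟨s, fun t ht => ht.1.1.le⟩
      set b : ℝ := sInf (Set.Ioc s 1 ∩ A) with hbdef
      obtain ⟨u, hu_anti, hu_tend, hu_mem⟩ := exists_seq_tendsto_sInf hSne hbdd
      have hsb : s ≤ b := le_csInf hSne fun t ht => ht.1.1.le
      have hb1 : b ≤ 1 := by
        obtain ⟨t0, ht0⟩ := hSne
        exact (csInf_le hbdd ht0).trans ht0.1.2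
      have hIic_inter : (⋂ n, Set.Iic (u n)) = Set.Iic b := by
        ext x
        simp only [Set.mem_iInter, Set.mem_Iic]
        constructor
        · intro h
          exact ge_of_tendsto hu_tend (Filter.Eventually.of_forall h)
        · intro h n
          exact h.trans (csInf_le hbdd (hu_mem n))
      have hFb : ν (Set.Iic b) = ENNReal.ofReal b := by
        have ht1 : Filter.Tendsto (fun n => ν (Set.Iic (u n))) Filter.atTop
            (nhds (ν (⋂ n, Set.Iic (u n)))) :=
          tendsto_measure_iInter_atTop (fun n => measurableSet_Iic.nullMeasurableSet)
            (fun i j hij => Set.Iic_subset_Iic.mpr (hu_anti hij)) ⟨0, measure_ne_top _ _⟩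
        rw [hIic_inter] at ht1
        have ht2 : Filter.Tendsto (fun n => ν (Set.Iic (u n))) Filter.atTop
            (nhds (ENNReal.ofReal b)) := by
          have he : (fun n => ν (Set.Iic (u n))) = fun n => ENNReal.ofReal (u n) :=
            funext fun n => (hu_mem n).2
          rw [he]
          exact (ENNReal.continuous_ofReal.tendsto b).comp hu_tend
        exact tendsto_nhds_unique ht1 ht2
      have hsb0 : ν (Set.Ioc s b) = 0 := by
        have hIoo : ν (Set.Ioo s b) = 0 := by
          refine measure_mono_null ?_ hAc
          intro t ht
          simp only [Set.mem_compl_iff]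
          intro htA
          have : b ≤ t := csInf_le hbdd ⟨⟨ht.1, ht.2.le.trans hb1⟩, htA⟩
          exact absurd ht.2 (not_lt.mpr this)
        refine measure_mono_null (fun t ht => ?_) (measure_union_null hIoo (hatom b))
        rcases eq_or_lt_of_le ht.2 with he | hlt'
        · exact Or.inr (by simp [he])
        · exact Or.inl ⟨ht.1, hlt'⟩
      have hFb2 : ν (Set.Iic b) = ν (Set.Iic s) := by
        rw [meas_split ν hsb, hsb0, add_zero]
      have hbc : b = c := by
        have hbb : ENNReal.ofReal b = ENNReal.ofReal c := by
          rw [← hFb, hFb2, hFs]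
        exact (ENNReal.ofReal_eq_ofReal_iff (hs.1.trans hsb) hc0).mp hbb
      linarith
    · rw [hFs, heq]
    · -- s < c : impossible
      exfalso
      have hc_pos : (0:ℝ) < c := lt_of_le_of_lt hs.1 hgt
      have hIio0 : ν (Set.Iio 0) = 0 := by
        refine measure_mono_null ?_ hsupp
        intro t ht
        simp only [Set.mem_compl_iff]
        intro hc
        exact absurd hc.1 (not_le.mpr ht)
      have hdown : ν (Set.Icc 0 s ∩ A) ≠ 0 := by
        intro h0
        have h2 : ν (Set.Icc 0 s) = 0 := by
          have hb : ν (Set.Icc 0 s) ≤ ν (Set.Icc 0 s ∩ A) + ν Aᶜ := by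
            refine (measure_mono (fun t ht => ?_)).trans (measure_union_le _ _)
            by_cases htA : t ∈ A
            · exact Or.inl ⟨ht, htA⟩
            · exact Or.inr htA
          simpa [h0, hAc] using hb
        have hb2 : ν (Set.Iic s) ≤ ν (Set.Iio 0) + ν (Set.Icc 0 s) := by
          refine (measure_mono (fun t ht => ?_)).trans (measure_union_le _ _)
          rcases lt_or_ge t 0 with h | h
          · exact Or.inl h
          · exact Or.inr ⟨h, ht⟩
        rw [hIio0, h2, add_zero, hFs] at hb2
        have : (0:ℝ≥0∞) < ENNReal.ofReal c := ENNReal.ofReal_pos.mpr hc_pos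
        exact absurd hb2 (not_le.mpr this)
      have hSne : (Set.Icc 0 s ∩ A).Nonempty := nonempty_of_measure_ne_zero hdown
      have hbdd : BddAbove (Set.Icc 0 s ∩ A) := ⟨s, fun t ht => ht.1.2⟩
      set a : ℝ := sSup (Set.Icc 0 s ∩ A) with hadef
      obtain ⟨u, hu_mono, hu_tend, hu_mem⟩ := exists_seq_tendsto_sSup hSne hbdd
      have has : a ≤ s := csSup_le hSne fun t ht => ht.1.2
      have ha0 : (0:ℝ) ≤ a := by
        obtain ⟨t0, ht0⟩ := hSne
        exact ht0.1.1.trans (le_csSup hbdd ht0)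
      have hsub1 : Set.Iio a ⊆ ⋃ n, Set.Iic (u n) := by
        intro x hx
        obtain ⟨n, hn⟩ := (hu_tend.eventually (eventually_gt_nhds hx)).exists
        exact Set.mem_iUnion.mpr ⟨n, hn.le⟩
      have hsub2 : (⋃ n, Set.Iic (u n)) ⊆ Set.Iic a := by
        intro x hx
        obtain ⟨n, hn⟩ := Set.mem_iUnion.mp hx
        exact hn.trans (le_csSup hbdd (hu_mem n))
      have hIioIic : ν (Set.Iio a) = ν (Set.Iic a) := by
        refine le_antisymm (measure_mono Set.Iio_subset_Iic_self) ?_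
        rw [← Set.Iio_union_right]
        refine (measure_union_le _ _).trans ?_
        rw [hatom a, add_zero]
      have hFa : ν (Set.Iic a) = ENNReal.ofReal a := by
        have ht1 : Filter.Tendsto (fun n => ν (Set.Iic (u n))) Filter.atTop
            (nhds (ν (⋃ n, Set.Iic (u n)))) :=
          tendsto_measure_iUnion_atTop fun i j hij => Set.Iic_subset_Iic.mpr (hu_mono hij)
        have hU : ν (⋃ n, Set.Iic (u n)) = ν (Set.Iic a) := by
          refine le_antisymm (measure_mono hsub2) ?_
          rw [← hIioIic]
          exact measure_mono hsub1
        rw [hU] at ht1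
        have ht2 : Filter.Tendsto (fun n => ν (Set.Iic (u n))) Filter.atTop
            (nhds (ENNReal.ofReal a)) := by
          have he : (fun n => ν (Set.Iic (u n))) = fun n => ENNReal.ofReal (u n) :=
            funext fun n => (hu_mem n).2
          rw [he]
          exact (ENNReal.continuous_ofReal.tendsto a).comp hu_tend
        exact tendsto_nhds_unique ht1 ht2
      have hsa0 : ν (Set.Ioc a s) = 0 := by
        refine measure_mono_null ?_ hAc
        intro t ht
        simp only [Set.mem_compl_iff]
        intro htA
        have : t ≤ a := le_csSup hbdd ⟨⟨ha0.trans ht.1.le, ht.2⟩, htA⟩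
        exact absurd ht.1 (not_lt.mpr this)
      have hFsa : ν (Set.Iic s) = ENNReal.ofReal a := by
        rw [meas_split ν has, hsa0, add_zero, hFa]
      have hac : a = c := by
        rw [hFs] at hFsa
        exact ((ENNReal.ofReal_eq_ofReal_iff hc0 ha0).mp hFsa).symm
      linarith
  -- conclude by extensionality on Iic
  refine Measure.ext_of_Iic ν m fun s => ?_
  rcases lt_or_ge s 0 with hs | hs
  · have hl : ν (Set.Iic s) = 0 := by
      refine measure_mono_null ?_ hsupp
      intro t ht
      simp only [Set.mem_compl_iff]
      intro hc
      exact absurd (hc.1.trans ht) (not_le.mpr hs)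
    have hr : m (Set.Iic s) = 0 := by
      rw [m, Measure.restrict_apply measurableSet_Iic]
      have he : Set.Iic s ∩ Set.Icc (0:ℝ) 1 = ∅ := by
        apply Set.eq_empty_iff_forall_notMem.mpr
        rintro t ⟨h1, h2, _⟩
        exact absurd (h2.trans h1) (not_le.mpr hs)
      rw [he]
      exact measure_empty
    rw [hl, hr]
  · rcases le_or_gt s 1 with hs1 | hs1
    · rw [key s ⟨hs, hs1⟩]
      rw [m, Measure.restrict_apply measurableSet_Iic]
      have : Set.Iic s ∩ Set.Icc (0:ℝ) 1 = Set.Icc 0 s := by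
        ext t
        simp only [Set.mem_inter_iff, Set.mem_Iic, Set.mem_Icc]
        constructor
        · rintro ⟨h1, h2, _⟩
          exact ⟨h2, h1⟩
        · rintro ⟨h1, h2⟩
          exact ⟨h2, h1, h2.trans hs1⟩
      rw [this, Real.volume_Icc]
      simp
    · have hl : ν (Set.Iic s) = 1 := by
        have h0 : ν (Set.Ioi s) = 0 := by
          refine measure_mono_null ?_ hsupp
          intro t ht
          simp only [Set.mem_compl_iff]
          intro hc
          exact absurd (hc.2.trans_lt (hs1.trans ht)) (lt_irrefl _)
        have h1le : (1:ℝ≥0∞) ≤ ν (Set.Iic s) + ν (Set.Ioi s) := by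
          calc (1:ℝ≥0∞) = ν Set.univ := measure_univ.symm
            _ ≤ ν (Set.Iic s ∪ Set.Ioi s) := measure_mono (by
                intro t _
                rcases le_or_gt t s with h | h
                · exact Or.inl h
                · exact Or.inr h)
            _ ≤ _ := measure_union_le _ _
        rw [h0, add_zero] at h1le
        exact le_antisymm prob_le_one h1le
      have hr : m (Set.Iic s) = 1 := by
        rw [m, Measure.restrict_apply measurableSet_Iic]
        have : Set.Iic s ∩ Set.Icc (0:ℝ) 1 = Set.Icc 0 1 := by
          refine Set.inter_eq_right.mpr fun t ht => ht.2.trans hs1.le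
        rw [this, Real.volume_Icc]
        norm_num
      rw [hl, hr]

end ATO

/-- Every measurable almost total ordering `≺` of `I` is generated by a nonsingular
measurable function: `f(u) := Leb({v ∈ I : v ≺ u})` is measurable, maps `I` to `I`,
preserves Lebesgue measure on `I`, has null level sets, and for almost every pair
`(u,v) ∈ I²`, `u ≺ v` iff `f(u) < f(v)`. -/
theorem almost_total_order_generated_by_function (R : Set (ℝ × ℝ))
    (hR : MeasurableSet R) (hato : IsAlmostTotalOrder R) :
    Measurable (ordf R) ∧
    (∀ u ∈ Set.Icc (0:ℝ) 1, ordf R u ∈ Set.Icc (0:ℝ) 1) ∧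
    Measure.map (ordf R) (volume.restrict (Set.Icc (0:ℝ) 1))
      = volume.restrict (Set.Icc (0:ℝ) 1) ∧
    (∀ t : ℝ, volume {u : ℝ | u ∈ Set.Icc (0:ℝ) 1 ∧ ordf R u = t} = 0) ∧
    volume {p : ℝ × ℝ | p.1 ∈ Set.Icc (0:ℝ) 1 ∧ p.2 ∈ Set.Icc (0:ℝ) 1 ∧
      ¬((p ∈ R) ↔ ordf R p.1 < ordf R p.2)} = 0 := by
  refine ⟨ATO.measurable_ordf hR, fun u _ => ATO.ordf_mem_Icc hR u, ?_, ?_, ?_⟩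
  · exact ATO.part3 hR hato
  · exact ATO.level_null hR hato
  · exact ATO.part5 hR hato
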